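/- If the co-execution group is unsaturated, then the minimum achievable period of a schedule for the group is exactly s*: there exists a period-s* schedule, and every period-T schedule has T ≥ s*. Consequently the round-robin schedule, which executes each job's rollout and training phase exactly once per cycle, completes all required work in the shortest possible cycle time. -/

import Mathlib

/-- A period-`T` schedule for the co-execution group `J` with rollout durations `r`,
training durations `t`, rollout start times `ρ` and training start times `τ`. -/
def IsPeriodSchedule {ι : Type*} (J : Finset ι) (r t : ι → ℝ) (T : ℝ)
    (ρ τ : ι → ℝ) : Prop :=
  (∀ i ∈ J, ∀ j ∈ J, i ≠ j →
      Disjoint (Set.Ico (ρ i) (ρ i + r i)) (Set.Ico (ρ j) (ρ j + r j))) ∧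
  (∀ j ∈ J, Set.Ico (ρ j) (ρ j + r j) ⊆ Set.Ico 0 T) ∧
  (∀ i ∈ J, ∀ j ∈ J, i ≠ j →
      Disjoint (Set.Ico (τ i) (τ i + t i)) (Set.Ico (τ j) (τ j + t j))) ∧
  (∃ a : ℝ, ∀ j ∈ J, Set.Ico (τ j) (τ j + t j) ⊆ Set.Ico a (a + T)) ∧
  (∀ j ∈ J, ρ j + r j ≤ τ j) ∧
  (∀ j ∈ J, τ j + t j ≤ ρ j + T)

private lemma ico_disjoint_of_le {b c : ℝ} (a d : ℝ) (h : b ≤ c) :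
    Disjoint (Set.Ico a b) (Set.Ico c d) := by
  apply Set.disjoint_left.2
  rintro x ⟨_, hx⟩ ⟨hx', _⟩
  linarith

/-- If the co-execution group is unsaturated, then the minimum
achievable period of a schedule for the group is exactly `s*`: there exists a
period-`s*` schedule, and every period-`T` schedule has `T ≥ s*`. -/
theorem minimum_period_eq_sstar {ι : Type*} (J : Finset ι) (hJ : J.Nonempty)
    (r t : ι → ℝ) (hr : ∀ j ∈ J, 0 ≤ r j) (ht : ∀ j ∈ J, 0 ≤ t j)
    (s : ι → ℝ) (hs : ∀ j, s j = r j + t j)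
    (jstar : ι) (hjstar : jstar ∈ J) (hmax : ∀ j ∈ J, s j ≤ s jstar)
    (hunsat_r : ∑ j ∈ J, r j ≤ s jstar) (hunsat_t : ∑ j ∈ J, t j ≤ s jstar) :
    (∃ ρ τ : ι → ℝ, IsPeriodSchedule J r t (s jstar) ρ τ) ∧
    (∀ (T : ℝ) (ρ τ : ι → ℝ), IsPeriodSchedule J r t T ρ τ → s jstar ≤ T) := by
  classical
  have hrt : s jstar = r jstar + t jstar := hs jstar
  have hr0 : 0 ≤ r jstar := hr _ hjstar
  have ht0 : 0 ≤ t jstar := ht _ hjstar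
  have hS0 : 0 ≤ s jstar := by linarith
  constructor
  · -- construction of a period-`s jstar` schedule
    set L : List ι := jstar :: (J.erase jstar).toList with hL
    have hmemL : ∀ j ∈ J, j ∈ L := by
      intro j hj
      by_cases h : j = jstar
      · simp [h, hL]
      · simp [hL, Finset.mem_toList, Finset.mem_erase, h, hj]
    have hnodup : L.Nodup := by
      refine List.nodup_cons.2 ⟨?_, Finset.nodup_toList _⟩
      simp [Finset.mem_toList]
    set pos : ι → ℕ := fun i => L.idxOf i with hpos
    have hposinj : ∀ i ∈ J, ∀ j ∈ J, pos i = pos j → i = j := by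
      intro i hi j hj h
      exact (List.idxOf_inj (hmemL i hi) (y := j)).1 h
    have hposjstar : pos jstar = 0 := by simp [hpos, hL]
    set F : ι → Finset ι := fun j => J.filter (fun k => pos k < pos j) with hF
    set E : ι → Finset ι := fun j => (J.erase jstar).filter (fun k => pos k < pos j) with hE
    set ρ : ι → ℝ := fun j => ∑ i ∈ F j, r i with hρ
    set τ : ι → ℝ := fun j => if j = jstar then r jstar
      else s jstar + ∑ i ∈ E j, t i with hτ
    have hρ0 : ∀ j, 0 ≤ ρ j := by
      intro j
      refine Finset.sum_nonneg fun i hi => hr i ?_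
      exact (Finset.mem_filter.1 hi).1
    have hρr : ∀ j ∈ J, ρ j + r j ≤ ∑ i ∈ J, r i := by
      intro j hj
      have hni : j ∉ F j := by simp [hF, Finset.mem_filter]
      have hsub : insert j (F j) ⊆ J := by
        intro k hk
        rcases Finset.mem_insert.1 hk with rfl | hk
        · exact hj
        · exact (Finset.mem_filter.1 hk).1
      calc ρ j + r j = ∑ k ∈ insert j (F j), r k := by
            rw [Finset.sum_insert hni]; ring
        _ ≤ ∑ i ∈ J, r i :=
            Finset.sum_le_sum_of_subset_of_nonneg hsub (fun k hk _ => hr k hk)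
    have hρjstar : ρ jstar = 0 := by
      have hFe : F jstar = ∅ := by
        refine Finset.eq_empty_of_forall_notMem fun k hk => ?_
        have h := (Finset.mem_filter.1 hk).2
        rw [hposjstar] at h
        exact Nat.not_lt_zero _ h
      simp only [hρ, hFe, Finset.sum_empty]
    have hρmono : ∀ i ∈ J, ∀ j ∈ J, pos i < pos j → ρ i + r i ≤ ρ j := by
      intro i hi j hj hij
      have hni : i ∉ F i := by simp [hF, Finset.mem_filter]
      have hsub : insert i (F i) ⊆ F j := by
        intro k hk
        rcases Finset.mem_insert.1 hk with rfl | hk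
        · exact Finset.mem_filter.2 ⟨hi, hij⟩
        · have h := Finset.mem_filter.1 hk
          exact Finset.mem_filter.2 ⟨h.1, h.2.trans hij⟩
      calc ρ i + r i = ∑ k ∈ insert i (F i), r k := by
            rw [Finset.sum_insert hni]; ring
        _ ≤ ρ j := Finset.sum_le_sum_of_subset_of_nonneg hsub
            (fun k hk _ => hr k (Finset.mem_filter.1 hk).1)
    have hE0 : ∀ j, 0 ≤ ∑ i ∈ E j, t i := by
      intro j
      refine Finset.sum_nonneg fun i hi => ht i ?_
      exact Finset.mem_of_mem_erase (Finset.mem_filter.1 hi).1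
    have hEt : ∀ j ∈ J, j ≠ jstar → (∑ i ∈ E j, t i) + t j ≤ r jstar := by
      intro j hj hjne
      have hni : j ∉ E j := by simp [hE, Finset.mem_filter]
      have hsub : insert j (E j) ⊆ J.erase jstar := by
        intro k hk
        rcases Finset.mem_insert.1 hk with rfl | hk
        · exact Finset.mem_erase.2 ⟨hjne, hj⟩
        · exact (Finset.mem_filter.1 hk).1
      have h1 : (∑ i ∈ E j, t i) + t j ≤ ∑ i ∈ J.erase jstar, t i := by
        calc (∑ i ∈ E j, t i) + t j = ∑ k ∈ insert j (E j), t k := by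
              rw [Finset.sum_insert hni]; ring
          _ ≤ ∑ i ∈ J.erase jstar, t i :=
              Finset.sum_le_sum_of_subset_of_nonneg hsub
                (fun k hk _ => ht k (Finset.mem_of_mem_erase hk))
      have h2 : ∑ i ∈ J.erase jstar, t i = (∑ i ∈ J, t i) - t jstar :=
        Finset.sum_erase_eq_sub hjstar
      linarith
    have hτge : ∀ j ∈ J, j ≠ jstar → s jstar ≤ τ j := by
      intro j hj hjne
      have := hE0 j
      simp only [hτ, if_neg hjne]
      linarith
    have hEmono : ∀ i ∈ J, ∀ j ∈ J, i ≠ jstar → j ≠ jstar → pos i < pos j →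
        τ i + t i ≤ τ j := by
      intro i hi j hj hine hjne hij
      have hni : i ∉ E i := by simp [hE, Finset.mem_filter]
      have hsub : insert i (E i) ⊆ E j := by
        intro k hk
        rcases Finset.mem_insert.1 hk with rfl | hk
        · exact Finset.mem_filter.2 ⟨Finset.mem_erase.2 ⟨hine, hi⟩, hij⟩
        · have h := Finset.mem_filter.1 hk
          exact Finset.mem_filter.2 ⟨h.1, h.2.trans hij⟩
      have : (∑ k ∈ E i, t k) + t i ≤ ∑ k ∈ E j, t k := by
        calc (∑ k ∈ E i, t k) + t i = ∑ k ∈ insert i (E i), t k := by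
              rw [Finset.sum_insert hni]; ring
          _ ≤ ∑ k ∈ E j, t k := Finset.sum_le_sum_of_subset_of_nonneg hsub
              (fun k hk _ => ht k (Finset.mem_of_mem_erase (Finset.mem_filter.1 hk).1))
      simp only [hτ, if_neg hine, if_neg hjne]
      linarith
    refine ⟨ρ, τ, ?_, ?_, ?_, ?_, ?_, ?_⟩
    · -- rollout disjointness
      intro i hi j hj hne
      have hpne : pos i ≠ pos j := fun h => hne (hposinj i hi j hj h)
      rcases lt_or_gt_of_ne hpne with h | h
      · exact ico_disjoint_of_le _ _ (hρmono i hi j hj h)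
      · exact (ico_disjoint_of_le _ _ (hρmono j hj i hi h)).symm
    · -- rollout containment
      intro j hj
      exact Set.Ico_subset_Ico (hρ0 j) ((hρr j hj).trans hunsat_r)
    · -- training disjointness
      intro i hi j hj hne
      by_cases hine : i = jstar
      · have hjne : j ≠ jstar := fun h => hne (hine.trans h.symm)
        have hτi : τ i = r jstar := by simp [hτ, hine]
        have hti : t i = t jstar := by rw [hine]
        have h1 : τ i + t i ≤ τ j := by
          have := hτge j hj hjne
          rw [hτi, hti]; linarith
        exact ico_disjoint_of_le _ _ h1
      · by_cases hjne : j = jstar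
        · have hτj : τ j = r jstar := by simp [hτ, hjne]
          have htj : t j = t jstar := by rw [hjne]
          have h1 : τ j + t j ≤ τ i := by
            have := hτge i hi hine
            rw [hτj, htj]; linarith
          exact (ico_disjoint_of_le _ _ h1).symm
        · have hpne : pos i ≠ pos j := fun h => hne (hposinj i hi j hj h)
          rcases lt_or_gt_of_ne hpne with h | h
          · exact ico_disjoint_of_le _ _ (hEmono i hi j hj hine hjne h)
          · exact (ico_disjoint_of_le _ _ (hEmono j hj i hi hjne hine h)).symm
    · -- containment in a window of length s*
      refine ⟨r jstar, fun j hj => ?_⟩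
      by_cases hjne : j = jstar
      · subst hjne
        simp only [hτ, if_pos rfl]
        exact Set.Ico_subset_Ico le_rfl (by linarith)
      · have h1 := hτge j hj hjne
        have h2 := hEt j hj hjne
        simp only [hτ, if_neg hjne] at h1 ⊢
        refine Set.Ico_subset_Ico (by linarith) (by linarith)
    · -- rollout before training
      intro j hj
      by_cases hjne : j = jstar
      · subst hjne
        simp only [hτ, if_pos rfl, hρjstar]
        linarith
      · have h1 := hτge j hj hjne
        have h2 := (hρr j hj).trans hunsat_r
        linarith
    · -- training finishes before next rollout
      intro j hj
      by_cases hjne : j = jstar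
      · subst hjne
        simp only [hτ, if_pos rfl, hρjstar]
        linarith
      · have h2 := hEt j hj hjne
        have hposj : 0 < pos j := by
          have : pos j ≠ pos jstar := fun h => hjne (hposinj j hj jstar hjstar h)
          omega
        have hjs : jstar ∈ F j := Finset.mem_filter.2 ⟨hjstar, by omega⟩
        have h3 : r jstar ≤ ρ j :=
          Finset.single_le_sum (fun k hk => hr k (Finset.mem_filter.1 hk).1) hjs
        simp only [hτ, if_neg hjne]
        linarith
  · -- lower bound
    rintro T ρ τ ⟨-, -, -, -, h5, h6⟩
    have ha := h5 jstar hjstar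
    have hb := h6 jstar hjstar
    linarith
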